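/- arXiv:2101.04888 — 5 statements merged into one kernel-verified Lean document; each statement's English description precedes it below -/
import Mathlib

section
/- Let k ≥ 1 and let Ω₁, …, Ω_k be nonempty finite sets, and let Ω = Ω₁ × ⋯ × Ω_k carry the uniform probability measure. For every map A : Ω → {1,…,k} and every subset S ⊆ Ω, the rejection-resampled variable Z satisfies |S|/|Ω| ≤ sqrt( k · Pr[Z ∈ S] ); equivalently, in counting form, (|S|/|Ω|)² ≤ k · (1/|Ω|) · Σ_{x ∈ Ω} |{v ∈ Ω_{A(x)} : x_{A(x)→v} ∈ S}| / |Ω_{A(x)}|. -/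
open Finset in
/-- **Rejection Resampling** (counting form). Let `Ω = Ω₁ × ⋯ × Ω_k` be a product of
nonempty finite sets with the uniform measure. For any map `A : Ω → Fin k` selecting a
coordinate and any subset `S ⊆ Ω`, the rejection-resampled variable
`Z = X_{A(X) → V}` (with `X` uniform on `Ω` and `V` uniform on `Ω_{A(X)}`) satisfies
`(|S|/|Ω|)² ≤ k · Pr[Z ∈ S]`. -/
theorem rejection_resampling
    {k : ℕ} (hk : 1 ≤ k) (Ω : Fin k → Type)
    [∀ i, Fintype (Ω i)] [∀ i, Nonempty (Ω i)] [∀ i, DecidableEq (Ω i)]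
    (A : (∀ i, Ω i) → Fin k) (S : Finset (∀ i, Ω i)) :
    ((S.card : ℝ) / (Fintype.card (∀ i, Ω i) : ℝ)) ^ 2 ≤
      (k : ℝ) * ((1 : ℝ) / (Fintype.card (∀ i, Ω i) : ℝ)) *
        ∑ x : ∀ i, Ω i,
          ((Finset.univ.filter
              (fun v : Ω (A x) => Function.update x (A x) v ∈ S)).card : ℝ) /
            (Fintype.card (Ω (A x)) : ℝ) := by
  classical
  set f : (∀ i, Ω i) → ℝ := fun x =>
    ((Finset.univ.filter
        (fun v : Ω (A x) => Function.update x (A x) v ∈ S)).card : ℝ) /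
      (Fintype.card (Ω (A x)) : ℝ) with hf
  have hN0 : (0 : ℝ) < (Fintype.card (∀ i, Ω i) : ℝ) := by
    exact_mod_cast Fintype.card_pos
  -- positivity of f on S
  have hfpos : ∀ x ∈ S, 0 < f x := by
    intro x hx
    have h1 : Function.update x (A x) (x (A x)) ∈ S := by
      simpa [Function.update_eq_self] using hx
    have hcard : 0 < (Finset.univ.filter
        (fun v : Ω (A x) => Function.update x (A x) v ∈ S)).card := by
      refine Finset.card_pos.2 ⟨x (A x), ?_⟩
      simp [Function.update_eq_self, hx, h1]
    have hΩ : (0 : ℝ) < (Fintype.card (Ω (A x)) : ℝ) := by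
      exact_mod_cast Fintype.card_pos
    exact div_pos (by exact_mod_cast hcard) hΩ
  have hfnn : ∀ x, 0 ≤ f x := by
    intro x; exact div_nonneg (by positivity) (by positivity)
  -- Cauchy-Schwarz
  have hCS : ((S.card : ℝ)) ^ 2 ≤ (∑ x ∈ S, f x) * (∑ x ∈ S, (f x)⁻¹) := by
    have := Finset.sum_sq_le_sum_mul_sum_of_sq_eq_mul S
      (r := fun _ => (1 : ℝ)) (f := f) (g := fun x => (f x)⁻¹)
      (fun x hx => (hfpos x hx).le) (fun x hx => (inv_nonneg.2 (hfpos x hx).le))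
      (fun x hx => by rw [mul_inv_cancel₀ (hfpos x hx).ne']; norm_num)
    simpa using this
  -- key counting bound for fixed coordinate i
  have hkey : ∀ i : Fin k, ∑ x ∈ S.filter (fun x => A x = i), (f x)⁻¹ ≤
      (Fintype.card (∀ i, Ω i) : ℝ) := by
    intro i
    set T := S.filter (fun x => A x = i) with hT
    set c : (∀ j, Ω j) → ℝ := fun z =>
      ((Finset.univ.filter (fun v : Ω i => Function.update z i v ∈ S)).card : ℝ) with hc
    have hstep : ∀ x ∈ T, (f x)⁻¹ = ∑ _v : Ω i, (c x)⁻¹ := by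
      intro x hx
      have hAx : A x = i := (Finset.mem_filter.1 hx).2
      have hxS : x ∈ S := (Finset.mem_filter.1 hx).1
      subst hAx
      have hcx : c x = ((Finset.univ.filter
          (fun v : Ω (A x) => Function.update x (A x) v ∈ S)).card : ℝ) := rfl
      rw [Finset.sum_const, Finset.card_univ, nsmul_eq_mul, hcx]
      rw [hf]
      rw [inv_div]
      rw [div_eq_mul_inv]
    rw [Finset.sum_congr rfl hstep]
    -- rewrite as a sum over the product type with an indicator
    have hprod : ∑ x ∈ T, ∑ _v : Ω i, (c x)⁻¹ =
        ∑ p : (∀ j, Ω j) × Ω i, (if p.1 ∈ T then (c p.1)⁻¹ else 0) := by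
      have hsw : ∀ x, (∑ _y : Ω i, if x ∈ T then (c x)⁻¹ else 0) =
          if x ∈ T then (∑ _y : Ω i, (c x)⁻¹) else 0 := fun x => by
        split <;> simp
      rw [Fintype.sum_prod_type]
      simp only
      rw [show (∑ x : ∀ j, Ω j, ∑ _y : Ω i, if x ∈ T then (c x)⁻¹ else 0) =
          ∑ x : ∀ j, Ω j, if x ∈ T then (∑ _y : Ω i, (c x)⁻¹) else 0 from
        Finset.sum_congr rfl fun x _ => hsw x]
      rw [Finset.sum_ite_mem, Finset.univ_inter]
    rw [hprod]
    -- involution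
    have hinv : Function.Involutive
        (fun p : (∀ j, Ω j) × Ω i => (Function.update p.1 i p.2, p.1 i)) := by
      intro p
      simp [Function.update_idem, Function.update_eq_self]
    have hbij := hinv.bijective
    rw [← Function.Bijective.sum_comp hbij
      (fun p => (if p.1 ∈ T then (c p.1)⁻¹ else 0))]
    simp only
    rw [Fintype.sum_prod_type]
    have hcupd : ∀ (z : ∀ j, Ω j) (w : Ω i), c (Function.update z i w) = c z := by
      intro z w
      simp only [hc, Function.update_idem]
    calc ∑ z : ∀ j, Ω j, ∑ w : Ω i,
          (if Function.update z i w ∈ T then (c (Function.update z i w))⁻¹ else 0)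
        = ∑ z : ∀ j, Ω j, ((Finset.univ.filter
            (fun w : Ω i => Function.update z i w ∈ T)).card : ℝ) * (c z)⁻¹ := by
          refine Finset.sum_congr rfl fun z _ => ?_
          simp_rw [hcupd z]
          rw [← Finset.sum_filter, Finset.sum_const, nsmul_eq_mul]
      _ ≤ ∑ _z : ∀ j, Ω j, (1 : ℝ) := by
          refine Finset.sum_le_sum fun z _ => ?_
          rcases eq_or_ne (c z) 0 with h0 | h0
          · have : (Finset.univ.filter
                (fun w : Ω i => Function.update z i w ∈ T)).card = 0 := by
              rw [Finset.card_eq_zero]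
              rw [Finset.filter_eq_empty_iff]
              intro w _
              intro hw
              have hwS : Function.update z i w ∈ S := (Finset.mem_filter.1 hw).1
              have : 0 < (Finset.univ.filter
                  (fun v : Ω i => Function.update z i v ∈ S)).card :=
                Finset.card_pos.2 ⟨w, by simp [hwS]⟩
              simp only [hc] at h0
              simp only [Nat.cast_eq_zero] at h0
              omega
            rw [this, h0]; norm_num
          · have hle : ((Finset.univ.filter
                (fun w : Ω i => Function.update z i w ∈ T)).card : ℝ) ≤ c z := by
              simp only [hc]
              have hsub : (Finset.univ.filter
                  (fun w : Ω i => Function.update z i w ∈ T)) ⊆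
                  (Finset.univ.filter
                  (fun w : Ω i => Function.update z i w ∈ S)) := by
                intro w hw
                simp only [Finset.mem_filter] at *
                exact ⟨hw.1, (Finset.mem_filter.1 hw.2).1⟩
              exact_mod_cast Finset.card_le_card hsub
            have hcpos : (0 : ℝ) < c z := by
              simp only [hc]; simp only [hc] at h0
              have : 0 < (Finset.univ.filter
                  (fun v : Ω i => Function.update z i v ∈ S)).card := by
                rcases Nat.eq_zero_or_pos (Finset.univ.filter
                  (fun v : Ω i => Function.update z i v ∈ S)).card with h | h
                · exfalso; apply h0; exact_mod_cast h
                · exact h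
              exact_mod_cast this
            calc ((Finset.univ.filter
                (fun w : Ω i => Function.update z i w ∈ T)).card : ℝ) * (c z)⁻¹
                ≤ c z * (c z)⁻¹ := by
                  exact mul_le_mul_of_nonneg_right hle (inv_nonneg.2 hcpos.le)
              _ = 1 := mul_inv_cancel₀ hcpos.ne'
      _ = (Fintype.card (∀ i, Ω i) : ℝ) := by
          rw [Finset.sum_const, Finset.card_univ, nsmul_eq_mul, mul_one]
  -- sum over S of inverse
  have hsuminv : ∑ x ∈ S, (f x)⁻¹ ≤ (k : ℝ) * (Fintype.card (∀ i, Ω i) : ℝ) := by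
    have hsplit : ∑ x ∈ S, (f x)⁻¹ =
        ∑ i : Fin k, ∑ x ∈ S.filter (fun x => A x = i), (f x)⁻¹ := by
      rw [Finset.sum_fiberwise_eq_sum_filter S Finset.univ A (fun x => (f x)⁻¹)]
      simp
    rw [hsplit]
    calc ∑ i : Fin k, ∑ x ∈ S.filter (fun x => A x = i), (f x)⁻¹
        ≤ ∑ _i : Fin k, (Fintype.card (∀ i, Ω i) : ℝ) :=
          Finset.sum_le_sum fun i _ => hkey i
      _ = (k : ℝ) * (Fintype.card (∀ i, Ω i) : ℝ) := by
          rw [Finset.sum_const, Finset.card_univ, Fintype.card_fin, nsmul_eq_mul]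
  have hsumS : ∑ x ∈ S, f x ≤ ∑ x : ∀ i, Ω i, f x :=
    Finset.sum_le_sum_of_subset_of_nonneg (Finset.subset_univ S)
      (fun x _ _ => hfnn x)
  have hfinal : ((S.card : ℝ)) ^ 2 ≤
      (k : ℝ) * (Fintype.card (∀ i, Ω i) : ℝ) * ∑ x : ∀ i, Ω i, f x := by
    calc ((S.card : ℝ)) ^ 2 ≤ (∑ x ∈ S, f x) * (∑ x ∈ S, (f x)⁻¹) := hCS
      _ ≤ (∑ x : ∀ i, Ω i, f x) * ((k : ℝ) * (Fintype.card (∀ i, Ω i) : ℝ)) := by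
          apply mul_le_mul hsumS hsuminv
          · exact Finset.sum_nonneg fun x hx => inv_nonneg.2 (hfnn x)
          · exact Finset.sum_nonneg fun x _ => hfnn x
      _ = _ := by ring
  rw [div_pow, div_le_iff₀ (by positivity)]
  calc (S.card : ℝ) ^ 2 ≤
      (k : ℝ) * (Fintype.card (∀ i, Ω i) : ℝ) * ∑ x : ∀ i, Ω i, f x := hfinal
    _ = (k : ℝ) * ((1 : ℝ) / (Fintype.card (∀ i, Ω i) : ℝ)) *
        (∑ x : ∀ i, Ω i, f x) * (Fintype.card (∀ i, Ω i) : ℝ) ^ 2 := by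
        field_simp
end

section
/- Let D and V be finite types with V nonempty, and let Q : (D → V) → D be resampling-stable. Then for every function g : D → V, the number of pairs (f, v) ∈ (D → V) × V such that Function.update f (Q f) v = g is exactly |V|. -/
/-- For a resampling-stable query map `Q : (D → V) → D`, every function `g : D → V`
has exactly `|V|` preimage pairs `(f, v)` under the resampling map
`(f, v) ↦ Function.update f (Q f) v`. -/
theorem resampling_fiber_card
    {D V : Type} [Fintype D] [Fintype V] [DecidableEq D] [DecidableEq V] [Nonempty V]
    (Q : (D → V) → D)
    (hQ : ∀ (f : D → V) (v : V), Q (Function.update f (Q f) v) = Q f)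
    (g : D → V) :
    (Finset.univ.filter
        (fun p : (D → V) × V => Function.update p.1 (Q p.1) p.2 = g)).card =
      Fintype.card V := by
  rw [← Finset.card_univ (α := V)]
  apply Finset.card_bij' (fun p _ => p.1 (Q g)) (fun w _ => (Function.update g (Q g) w, g (Q g)))
  · intro p hp
    exact Finset.mem_univ _
  · intro w _
    simp only [Finset.mem_filter, Finset.mem_univ, true_and]
    rw [hQ g w, Function.update_idem, Function.update_eq_self]
  · intro p hp
    simp only [Finset.mem_filter, Finset.mem_univ, true_and] at hp
    have hQp : Q p.1 = Q g := by
      have := hQ p.1 p.2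
      rw [hp] at this
      exact this.symm
    rw [hQp] at hp
    have hQh : Q (Function.update p.1 (Q g) p.2) = Q g := by
      have := hQ p.1 p.2; rwa [hQp] at this
    have hv : p.2 = g (Q g) := by
      rw [← congrFun hp (Q g), Function.update_self]
    ext <;> simp only
    · rw [← hp, hQh, Function.update_idem]
      exact congrFun (Function.update_eq_self _ _) _
    · exact hv.symm
  · intro w _
    simp [Function.update_self]
end

section
/- Let D and V be finite nonempty types, let d : D → (D → V) → {0,1} be any indicator function, and for each α ∈ D let Q_α : (D → V) → D be resampling-stable. Suppose that for every function g : D → V, the number of α ∈ D with d(α, g) = 1 is at most ε₁·|D|. Then, for α sampled uniformly from D, f sampled uniformly from the functions D → V, and v sampled uniformly from V, all independently, E[ d(α, Function.update f (Q_α f) v) ] = E_{α, g}[ d(α, g) ] ≤ ε₁, where in the middle expression g is uniform over the functions D → V. -/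
/-- Expected fraction of problematic points after resampling. If every function
`g : D → V` has at most an `ε₁` fraction of problematic points (`d α g = 1`), and each
query map `Q α` is resampling-stable, then the expectation of
`d α (Function.update f (Q α f) v)` over uniform independent `α`, `f`, `v` equals the
expectation of `d α g` over uniform `(α, g)`, and is at most `ε₁`. -/
theorem resampled_problematic_expectation
    {D V : Type} [Fintype D] [Fintype V] [DecidableEq D] [DecidableEq V]
    [Nonempty D] [Nonempty V]
    (ε₁ : ℝ) (d : D → (D → V) → ℝ)
    (hd01 : ∀ (α : D) (g : D → V), d α g = 0 ∨ d α g = 1)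
    (Q : D → (D → V) → D)
    (hQ : ∀ (α : D) (f : D → V) (v : V),
      Q α (Function.update f (Q α f) v) = Q α f)
    (hcount : ∀ g : D → V,
      ((Finset.univ.filter (fun α : D => d α g = 1)).card : ℝ) ≤
        ε₁ * (Fintype.card D : ℝ)) :
    (∑ α : D, ∑ f : D → V, ∑ v : V, d α (Function.update f (Q α f) v)) /
        ((Fintype.card D : ℝ) * (Fintype.card (D → V) : ℝ) * (Fintype.card V : ℝ)) =
      (∑ α : D, ∑ g : D → V, d α g) /
        ((Fintype.card D : ℝ) * (Fintype.card (D → V) : ℝ)) ∧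
    (∑ α : D, ∑ g : D → V, d α g) /
        ((Fintype.card D : ℝ) * (Fintype.card (D → V) : ℝ)) ≤ ε₁ := by
  have hVpos : (0 : ℝ) < (Fintype.card V : ℝ) := by
    exact_mod_cast Fintype.card_pos
  -- key: for each α, the triple sum equals |V| * double sum
  have key : ∀ α : D,
      (∑ f : D → V, ∑ v : V, d α (Function.update f (Q α f) v))
        = (Fintype.card V : ℝ) * ∑ g : D → V, d α g := by
    intro α
    have hbij : Function.Bijective
        (fun p : (D → V) × V =>
          ((Function.update p.1 (Q α p.1) p.2, p.1 (Q α p.1)) : (D → V) × V)) := by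
      apply Function.bijective_iff_has_inverse.2
      refine ⟨fun p => (Function.update p.1 (Q α p.1) p.2, p.1 (Q α p.1)), ?_, ?_⟩
      · rintro ⟨f, v⟩
        dsimp only
        rw [hQ]
        refine Prod.ext ?_ (by simp)
        funext x
        by_cases hx : x = Q α f <;> simp [Function.update, hx]
      · rintro ⟨g, w⟩
        dsimp only
        rw [hQ]
        refine Prod.ext ?_ (by simp)
        funext x
        by_cases hx : x = Q α g <;> simp [Function.update, hx]
    calc (∑ f : D → V, ∑ v : V, d α (Function.update f (Q α f) v))
        = ∑ p : (D → V) × V, d α (Function.update p.1 (Q α p.1) p.2) :=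
          (Fintype.sum_prod_type
            (fun p : (D → V) × V => d α (Function.update p.1 (Q α p.1) p.2))).symm
      _ = ∑ p : (D → V) × V, d α p.1 :=
          Fintype.sum_bijective _ hbij _ _ (fun p => rfl)
      _ = ∑ g : D → V, ∑ w : V, d α g :=
          Fintype.sum_prod_type (fun p : (D → V) × V => d α p.1)
      _ = (Fintype.card V : ℝ) * ∑ g : D → V, d α g := by
          simp [Finset.sum_const, mul_comm, Finset.mul_sum]
  constructor
  · have : (∑ α : D, ∑ f : D → V, ∑ v : V, d α (Function.update f (Q α f) v))
        = (Fintype.card V : ℝ) * ∑ α : D, ∑ g : D → V, d α g := by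
      rw [Finset.mul_sum]; exact Finset.sum_congr rfl fun α _ => key α
    rw [this]
    field_simp
  · -- second part
    have hDpos : (0 : ℝ) < (Fintype.card D : ℝ) := by exact_mod_cast Fintype.card_pos
    have hFpos : (0 : ℝ) < (Fintype.card (D → V) : ℝ) := by exact_mod_cast Fintype.card_pos
    have hsum : (∑ α : D, ∑ g : D → V, d α g)
        ≤ ε₁ * (Fintype.card D : ℝ) * (Fintype.card (D → V) : ℝ) := by
      rw [Finset.sum_comm]
      have : ∀ g : D → V, (∑ α : D, d α g) ≤ ε₁ * (Fintype.card D : ℝ) := by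
        intro g
        have : (∑ α : D, d α g)
            = ((Finset.univ.filter (fun α : D => d α g = 1)).card : ℝ) := by
          rw [Finset.card_filter]
          push_cast
          apply Finset.sum_congr rfl
          intro α _
          rcases hd01 α g with h | h <;> simp [h]
        rw [this]; exact hcount g
      calc (∑ g : D → V, ∑ α : D, d α g)
          ≤ ∑ _g : D → V, ε₁ * (Fintype.card D : ℝ) :=
            Finset.sum_le_sum fun g _ => this g
        _ = ε₁ * (Fintype.card D : ℝ) * (Fintype.card (D → V) : ℝ) := by
            simp [Finset.sum_const, mul_comm]
    rw [div_le_iff₀ (by positivity)]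
    linarith [hsum]
end

section
/- Let D and H be finite nonempty sets, let τ be a positive integer, and let ε₁ be a real number with 0 < ε₁ ≤ 1 and τ·ε₁^{1/4} ≤ 1. Let Q : D → H → Finset D satisfy |Q(α, h)| ≤ τ for all α, h; let d : D → H → {0,1} and, for each j ∈ {1,…,τ}, let D^j : D → H → ℝ≥0. Assume (i) Σ_{α,h} d(α,h) ≤ ε₁·|D|·|H|, and (ii) for every j, Σ_{α,h} D^j(α,h) ≤ ε₁·|D|·|H|. Call α robust for h if d(α,h) = 0 and D^j(α,h) ≤ ε₁^{1/2} for every j ∈ {1,…,τ}; call a pair (α', h) good if every α with α' ∈ Q(α,h) is robust for h and |{α : α' ∈ Q(α,h)}| ≤ ε₁^{-1/4}, and bad otherwise. Then the number of bad pairs (α', h) ∈ D × H is at most 3·τ·ε₁^{1/4}·|D|·|H|; that is, a uniformly random pair (α', h) is bad with probability at most 3τ·ε₁^{1/4}. -/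
open Classical in
lemma my_markov {ι : Type} [Fintype ι] (f : ι → ℝ) (hf : ∀ i, 0 ≤ f i) (t : ℝ) :
    t * ((Finset.univ.filter (fun i => t < f i)).card : ℝ) ≤ ∑ i, f i := by
  classical
  calc t * ((Finset.univ.filter (fun i => t < f i)).card : ℝ)
      = ∑ _i ∈ Finset.univ.filter (fun i => t < f i), t := by
        rw [Finset.sum_const, nsmul_eq_mul, mul_comm]
    _ ≤ ∑ i ∈ Finset.univ.filter (fun i => t < f i), f i := by
        apply Finset.sum_le_sum
        intro i hi
        exact le_of_lt (Finset.mem_filter.mp hi).2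
    _ ≤ ∑ i, f i := Finset.sum_le_sum_of_subset_of_nonneg (Finset.filter_subset _ _)
        (fun i _ _ => hf i)

open Classical in
lemma my_count {D H : Type} [Fintype D] [Fintype H] [DecidableEq D]
    (Q : D → H → Finset D) (τ : ℕ) (hQcard : ∀ α h, (Q α h).card ≤ τ) :
    ∑ p : D × H, (Finset.univ.filter (fun α : D => p.1 ∈ Q α p.2)).card
      ≤ τ * Fintype.card D * Fintype.card H := by
  classical
  calc ∑ p : D × H, (Finset.univ.filter (fun α : D => p.1 ∈ Q α p.2)).card
      = ∑ α' : D, ∑ h : H, ∑ α : D, if α' ∈ Q α h then 1 else 0 := by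
        rw [Fintype.sum_prod_type]
        refine Finset.sum_congr rfl fun a _ => Finset.sum_congr rfl fun h _ => ?_
        rw [Finset.card_filter]
    _ = ∑ h : H, ∑ α : D, ∑ α' : D, if α' ∈ Q α h then 1 else 0 := by
        rw [Finset.sum_comm]
        exact Finset.sum_congr rfl fun h _ => Finset.sum_comm
    _ = ∑ h : H, ∑ α : D, (Q α h).card := by
        refine Finset.sum_congr rfl fun h _ => Finset.sum_congr rfl fun α _ => ?_
        simp [Finset.card_filter]
    _ ≤ ∑ _h : H, ∑ _α : D, τ := by
        exact Finset.sum_le_sum fun h _ => Finset.sum_le_sum fun α _ => hQcard α h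
    _ = τ * Fintype.card D * Fintype.card H := by
        simp [Finset.sum_const, mul_comm, mul_assoc, mul_left_comm]

open Classical in
/-- A random point-function pair is good with high probability. With `Q α h` the set of
at most `τ` points queried on input `α` under oracle `h`, `d α h ∈ {0,1}` indicating
that `α` is problematic, and `Dj j α h` the probability that `α` becomes problematic
when the answer to the `j`-th query is resampled, assume both `d` and each `Dj j`
have average at most `ε₁`. Call `α` robust for `h` if `d α h = 0` and
`Dj j α h ≤ ε₁^{1/2}` for all `j`, and call `(α', h)` good if every `α` querying `α'`
is robust for `h` and at most `ε₁^{-1/4}` many `α` query `α'`. Then the number of bad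
pairs is at most `3τ·ε₁^{1/4}·|D|·|H|`. -/
theorem good_pair_probability
    {D H : Type} [Fintype D] [Fintype H] [DecidableEq D] [DecidableEq H]
    [Nonempty D] [Nonempty H]
    (τ : ℕ) (hτ : 0 < τ)
    (ε₁ : ℝ) (hε0 : 0 < ε₁) (hε1 : ε₁ ≤ 1)
    (hτε : (τ : ℝ) * ε₁ ^ ((1 : ℝ) / 4) ≤ 1)
    (Q : D → H → Finset D) (hQcard : ∀ (α : D) (h : H), (Q α h).card ≤ τ)
    (d : D → H → ℝ) (hd01 : ∀ (α : D) (h : H), d α h = 0 ∨ d α h = 1)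
    (Dj : Fin τ → D → H → ℝ) (hDj0 : ∀ (j : Fin τ) (α : D) (h : H), 0 ≤ Dj j α h)
    (hd : (∑ α : D, ∑ h : H, d α h) ≤ ε₁ * (Fintype.card D : ℝ) * (Fintype.card H : ℝ))
    (hDj : ∀ j : Fin τ,
      (∑ α : D, ∑ h : H, Dj j α h) ≤ ε₁ * (Fintype.card D : ℝ) * (Fintype.card H : ℝ)) :
    ((Finset.univ.filter
        (fun p : D × H =>
          ¬ ((∀ α : D, p.1 ∈ Q α p.2 →
                (d α p.2 = 0 ∧ ∀ j : Fin τ, Dj j α p.2 ≤ ε₁ ^ ((1 : ℝ) / 2))) ∧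
             ((Finset.univ.filter (fun α : D => p.1 ∈ Q α p.2)).card : ℝ) ≤
                (ε₁ ^ ((1 : ℝ) / 4))⁻¹))).card : ℝ) ≤
      3 * (τ : ℝ) * ε₁ ^ ((1 : ℝ) / 4) * (Fintype.card D : ℝ) * (Fintype.card H : ℝ) := by
  classical
  set ε4 := ε₁ ^ ((1 : ℝ) / 4) with hε4def
  set ε2 := ε₁ ^ ((1 : ℝ) / 2) with hε2def
  have hε4pos : 0 < ε4 := Real.rpow_pos_of_pos hε0 _
  have hε2pos : 0 < ε2 := Real.rpow_pos_of_pos hε0 _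
  have hε42 : ε4 * ε4 = ε2 := by
    rw [hε4def, hε2def, ← Real.rpow_add hε0]; norm_num
  have hε22 : ε2 * ε2 = ε₁ := by
    rw [hε2def, ← Real.rpow_add hε0]; norm_num
  have hε14 : ε₁ ≤ ε4 := by
    rw [hε4def]
    nth_rewrite 1 [← Real.rpow_one ε₁]
    exact Real.rpow_le_rpow_of_exponent_ge hε0 hε1 (by norm_num)
  set N := (Fintype.card D : ℝ) * (Fintype.card H : ℝ) with hN
  have hNnn : 0 ≤ N := by positivity
  -- the two bad sets
  set B1 : Finset (D × H) := Finset.univ.filter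
    (fun p : D × H => ∃ α : D, p.1 ∈ Q α p.2 ∧
      ¬ (d α p.2 = 0 ∧ ∀ j : Fin τ, Dj j α p.2 ≤ ε2)) with hB1def
  set B2 : Finset (D × H) := Finset.univ.filter
    (fun p : D × H =>
      ε4⁻¹ < ((Finset.univ.filter (fun α : D => p.1 ∈ Q α p.2)).card : ℝ)) with hB2def
  have hsub : (Finset.univ.filter
      (fun p : D × H =>
        ¬ ((∀ α : D, p.1 ∈ Q α p.2 →
              (d α p.2 = 0 ∧ ∀ j : Fin τ, Dj j α p.2 ≤ ε2)) ∧
           ((Finset.univ.filter (fun α : D => p.1 ∈ Q α p.2)).card : ℝ) ≤ ε4⁻¹)))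
      ⊆ B1 ∪ B2 := by
    intro p hp
    rw [Finset.mem_filter] at hp
    rcases not_and_or.mp hp.2 with h1 | h2
    · refine Finset.mem_union_left _ ?_
      rw [hB1def, Finset.mem_filter]
      push_neg at h1
      obtain ⟨α, hα1, hα2⟩ := h1
      refine ⟨Finset.mem_univ _, α, hα1, fun hcon => ?_⟩
      obtain ⟨j, hj⟩ := hα2 hcon.1
      exact absurd (hcon.2 j) (not_le.mpr hj)
    · refine Finset.mem_union_right _ ?_
      rw [hB2def, Finset.mem_filter]
      exact ⟨Finset.mem_univ _, lt_of_not_ge h2⟩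
  -- non-robust pairs
  set NR : Finset (D × H) := Finset.univ.filter
    (fun q : D × H => ¬ (d q.1 q.2 = 0 ∧ ∀ j : Fin τ, Dj j q.1 q.2 ≤ ε2)) with hNRdef
  -- B1 is covered by queries of non-robust pairs
  have hB1sub : B1 ⊆ NR.biUnion (fun q => (Q q.1 q.2).image (fun α' => (α', q.2))) := by
    intro p hp
    rw [hB1def, Finset.mem_filter] at hp
    obtain ⟨-, α, hmem, hnr⟩ := hp
    refine Finset.mem_biUnion.mpr ⟨(α, p.2), ?_, ?_⟩
    · rw [hNRdef, Finset.mem_filter]; exact ⟨Finset.mem_univ _, hnr⟩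
    · exact Finset.mem_image.mpr ⟨p.1, hmem, rfl⟩
  have hB1card : B1.card ≤ NR.card * τ := by
    calc B1.card ≤ (NR.biUnion (fun q => (Q q.1 q.2).image (fun α' => (α', q.2)))).card :=
          Finset.card_le_card hB1sub
      _ ≤ ∑ q ∈ NR, ((Q q.1 q.2).image (fun α' => (α', q.2))).card :=
          Finset.card_biUnion_le
      _ ≤ ∑ _q ∈ NR, τ := Finset.sum_le_sum fun q _ =>
          le_trans (Finset.card_image_le) (hQcard q.1 q.2)
      _ = NR.card * τ := by rw [Finset.sum_const, smul_eq_mul]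
  -- bound on NR
  set Sd : Finset (D × H) := Finset.univ.filter (fun q : D × H => d q.1 q.2 ≠ 0) with hSddef
  have hSdcard : (Sd.card : ℝ) ≤ ε₁ * N := by
    calc (Sd.card : ℝ) = ∑ _q ∈ Sd, (1 : ℝ) := by simp
      _ ≤ ∑ q ∈ Sd, d q.1 q.2 := by
          apply Finset.sum_le_sum
          intro q hq
          rw [hSddef, Finset.mem_filter] at hq
          rcases hd01 q.1 q.2 with h | h
          · exact absurd h hq.2
          · rw [h]
      _ ≤ ∑ q : D × H, d q.1 q.2 := by
          apply Finset.sum_le_sum_of_subset_of_nonneg (Finset.filter_subset _ _)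
          intro q _ _
          rcases hd01 q.1 q.2 with h | h <;> rw [h] <;> norm_num
      _ = ∑ α : D, ∑ h : H, d α h := Fintype.sum_prod_type _
      _ ≤ ε₁ * N := by rw [hN]; linarith [hd]
  have hSjcard : ∀ j : Fin τ,
      (((Finset.univ.filter (fun q : D × H => ε2 < Dj j q.1 q.2)).card : ℝ)) ≤ ε2 * N := by
    intro j
    have hm := my_markov (fun q : D × H => Dj j q.1 q.2) (fun q => hDj0 j q.1 q.2) ε2
    have hsum : ∑ q : D × H, Dj j q.1 q.2 ≤ ε₁ * N := by
      rw [hN, show (∑ q : D × H, Dj j q.1 q.2) = ∑ α : D, ∑ h : H, Dj j α h from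
        Fintype.sum_prod_type _]
      linarith [hDj j]
    have h2 : ε2 * ((Finset.univ.filter (fun q : D × H => ε2 < Dj j q.1 q.2)).card : ℝ)
        ≤ ε2 * (ε2 * N) := by
      rw [show ε2 * (ε2 * N) = ε₁ * N by rw [← hε22]; ring]
      exact le_trans hm hsum
    exact le_of_mul_le_mul_left h2 hε2pos
  have hNRcard : (NR.card : ℝ) ≤ ε₁ * N + τ * (ε2 * N) := by
    have hsubNR : NR ⊆ Sd ∪ Finset.univ.biUnion
        (fun j : Fin τ => Finset.univ.filter (fun q : D × H => ε2 < Dj j q.1 q.2)) := by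
      intro q hq
      rw [hNRdef, Finset.mem_filter] at hq
      rcases not_and_or.mp hq.2 with h1 | h2
      · apply Finset.mem_union_left
        rw [hSddef, Finset.mem_filter]
        exact ⟨Finset.mem_univ _, h1⟩
      · push_neg at h2
        obtain ⟨j, hj⟩ := h2
        refine Finset.mem_union_right _ (Finset.mem_biUnion.mpr ⟨j, Finset.mem_univ _, ?_⟩)
        rw [Finset.mem_filter]; exact ⟨Finset.mem_univ _, hj⟩
    have h1 : NR.card ≤ Sd.card + ∑ j : Fin τ,
        (Finset.univ.filter (fun q : D × H => ε2 < Dj j q.1 q.2)).card := by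
      calc NR.card ≤ (Sd ∪ _).card := Finset.card_le_card hsubNR
        _ ≤ Sd.card + (Finset.univ.biUnion
            (fun j : Fin τ => Finset.univ.filter (fun q : D × H => ε2 < Dj j q.1 q.2))).card :=
            Finset.card_union_le _ _
        _ ≤ Sd.card + ∑ j : Fin τ,
            (Finset.univ.filter (fun q : D × H => ε2 < Dj j q.1 q.2)).card := by
            exact Nat.add_le_add_left Finset.card_biUnion_le _
    calc (NR.card : ℝ) ≤ (Sd.card : ℝ) + ∑ j : Fin τ,
          ((Finset.univ.filter (fun q : D × H => ε2 < Dj j q.1 q.2)).card : ℝ) := by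
          exact_mod_cast h1
      _ ≤ ε₁ * N + ∑ _j : Fin τ, ε2 * N :=
          add_le_add hSdcard (Finset.sum_le_sum fun j _ => hSjcard j)
      _ = ε₁ * N + τ * (ε2 * N) := by
          rw [Finset.sum_const, Finset.card_univ, Fintype.card_fin, nsmul_eq_mul]
  -- B2 bound
  have hB2card : (B2.card : ℝ) ≤ ε4 * (τ * N) := by
    have hm := my_markov
      (fun p : D × H => ((Finset.univ.filter (fun α : D => p.1 ∈ Q α p.2)).card : ℝ))
      (fun p => Nat.cast_nonneg _) ε4⁻¹
    have hsum : (∑ p : D × H,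
        ((Finset.univ.filter (fun α : D => p.1 ∈ Q α p.2)).card : ℝ)) ≤ τ * N := by
      have := my_count Q τ hQcard
      rw [hN]
      push_cast
      rw [← mul_assoc]
      exact_mod_cast this
    have h2 : ε4⁻¹ * (B2.card : ℝ) ≤ τ * N := le_trans hm hsum
    calc (B2.card : ℝ) = ε4 * (ε4⁻¹ * (B2.card : ℝ)) := by
          field_simp
      _ ≤ ε4 * (τ * N) := by
          apply mul_le_mul_of_nonneg_left h2 (le_of_lt hε4pos)
  -- combine
  have hmain : ((Finset.univ.filter
      (fun p : D × H =>
        ¬ ((∀ α : D, p.1 ∈ Q α p.2 →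
              (d α p.2 = 0 ∧ ∀ j : Fin τ, Dj j α p.2 ≤ ε2)) ∧
           ((Finset.univ.filter (fun α : D => p.1 ∈ Q α p.2)).card : ℝ) ≤ ε4⁻¹))).card : ℝ)
      ≤ (B1.card : ℝ) + (B2.card : ℝ) := by
    have := le_trans (Finset.card_le_card hsub) (Finset.card_union_le B1 B2)
    exact_mod_cast this
  have hB1cardR : (B1.card : ℝ) ≤ τ * (ε₁ * N + τ * (ε2 * N)) := by
    calc (B1.card : ℝ) ≤ (NR.card : ℝ) * τ := by exact_mod_cast hB1card
      _ ≤ (ε₁ * N + τ * (ε2 * N)) * τ := by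
          apply mul_le_mul_of_nonneg_right hNRcard (by positivity)
      _ = τ * (ε₁ * N + τ * (ε2 * N)) := by ring
  have hτnn : (0 : ℝ) ≤ τ := Nat.cast_nonneg τ
  have hfin : (τ : ℝ) * (ε₁ * N + τ * (ε2 * N)) + ε4 * (τ * N) ≤ 3 * τ * ε4 * N := by
    have h1 : (τ : ℝ) * (ε₁ * N) ≤ τ * (ε4 * N) := by
      apply mul_le_mul_of_nonneg_left _ hτnn
      exact mul_le_mul_of_nonneg_right hε14 hNnn
    have h2 : (τ : ℝ) * (τ * (ε2 * N)) ≤ τ * (ε4 * N) := by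
      have : (τ : ℝ) * (ε2 * N) ≤ ε4 * N := by
        rw [← hε42]
        calc (τ : ℝ) * (ε4 * ε4 * N) = ((τ : ℝ) * ε4) * (ε4 * N) := by ring
          _ ≤ 1 * (ε4 * N) := mul_le_mul_of_nonneg_right hτε (by positivity)
          _ = ε4 * N := one_mul _
      exact mul_le_mul_of_nonneg_left this hτnn
    nlinarith [h1, h2]
  calc _ ≤ (B1.card : ℝ) + (B2.card : ℝ) := hmain
    _ ≤ τ * (ε₁ * N + τ * (ε2 * N)) + ε4 * (τ * N) := add_le_add hB1cardR hB2card
    _ ≤ 3 * τ * ε4 * N := hfin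
    _ = 3 * (τ : ℝ) * ε4 * (Fintype.card D : ℝ) * (Fintype.card H : ℝ) := by
        rw [hN]; ring
end

section
/- Let n and l be positive integers with l ≥ n, let p be a real number with 0 ≤ p ≤ 1/4, let H be a finite nonempty set, let δ ≥ 0, and let G ⊆ H satisfy |H \ G| ≤ δ·|H|. For each h ∈ H and each i ∈ {1,…,l}, let B(h, i) ⊆ {0,1}ⁿ be a set such that |B(h, i)| ≤ p·2ⁿ whenever h ∈ G. Then, for R = (R₁,…,R_l) sampled uniformly from ({0,1}ⁿ)^l and h sampled uniformly from H, independently, the probability that h ∉ G or that there exists m ∈ {0,1}ⁿ with m ⊕ R_i ∈ B(h, i) for every i ∈ {1,…,l} is at most δ + 2^{-n}. -/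
open Finset

theorem fiber_card {α β : Type} [Fintype α] [Fintype β] [DecidableEq β]
    (P : α × β → Prop) [DecidablePred P] :
    (univ.filter P).card = ∑ b : β, (univ.filter (fun a => P (a, b))).card := by
  rw [Finset.card_eq_sum_card_fiberwise (f := Prod.snd) (t := univ) (fun _ _ => mem_univ _)]
  refine Finset.sum_congr rfl fun b _ => ?_
  rw [Finset.filter_filter]
  apply Finset.card_nbij (fun x => x.1)
  · intro x hx; simp only [coe_filter, Set.mem_setOf_eq, mem_filter, mem_univ, true_and] at hx ⊢
    obtain ⟨h1, h2⟩ := hx; rw [show ((x.1 : α), b) = x by rw [← h2]]; exact h1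
  · intro x hx y hy hxy
    simp only [coe_filter, Set.mem_setOf_eq, mem_univ, true_and] at hx hy
    ext
    · exact hxy
    · rw [hx.2, hy.2]
  · intro a ha
    simp only [coe_filter, Set.mem_setOf_eq, mem_univ, true_and, Set.mem_image] at ha ⊢
    exact ⟨(a, b), ⟨ha, rfl⟩, rfl⟩

theorem shift_card (n l : ℕ) (s : Fin l → Finset (Fin n → Bool)) (m : Fin n → Bool) :
    (univ.filter (fun R : Fin l → (Fin n → Bool) =>
      ∀ i, (fun j => xor (m j) (R i j)) ∈ s i)).card = ∏ i, (s i).card := by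
  rw [← Fintype.card_piFinset]
  apply Finset.card_nbij' (fun R => fun i j => xor (m j) (R i j))
    (fun R => fun i j => xor (m j) (R i j))
  · intro R hR; simp only [coe_filter, Set.mem_setOf_eq, mem_filter, mem_univ, true_and] at hR
    rw [Finset.mem_coe, Fintype.mem_piFinset]; exact hR
  · intro R hR; rw [Finset.mem_coe, Fintype.mem_piFinset] at hR
    simp only [coe_filter, Set.mem_setOf_eq, mem_filter, mem_univ, true_and]
    intro i
    have : (fun j => xor (m j) (xor (m j) (R i j))) = R i := by funext j; simp
    rw [this]; exact hR i
  · intro R _; funext i j; simp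
  · intro R _; funext i j; simp

/-- Random `(R, h)` lies in the critical set with high probability. Let `G ⊆ H` be the
robust functions, with `|H \ G| ≤ δ·|H|`, and for `h ∈ G` let each bad set
`B h i ⊆ {0,1}ⁿ` have size at most `p·2ⁿ` with `p ≤ 1/4` and `l ≥ n`. Then for uniform
independent `R ∈ ({0,1}ⁿ)^l` and `h ∈ H`, the probability that `h ∉ G` or that some
message `m` satisfies `m ⊕ R_i ∈ B h i` for every index `i` is at most `δ + 2^{-n}`. -/
theorem critical_set_probability
    (n l : ℕ) (hn : 0 < n) (hl : 0 < l) (hln : n ≤ l)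
    (p : ℝ) (hp0 : 0 ≤ p) (hp4 : p ≤ 1 / 4)
    {H : Type} [Fintype H] [DecidableEq H] [Nonempty H]
    (δ : ℝ) (hδ : 0 ≤ δ)
    (G : Finset H)
    (hG : ((Finset.univ \ G).card : ℝ) ≤ δ * (Fintype.card H : ℝ))
    (B : H → Fin l → Finset (Fin n → Bool))
    (hB : ∀ h ∈ G, ∀ i : Fin l, ((B h i).card : ℝ) ≤ p * 2 ^ n) :
    ((Finset.univ.filter
        (fun Rh : (Fin l → (Fin n → Bool)) × H =>
          Rh.2 ∉ G ∨
            ∃ m : Fin n → Bool, ∀ i : Fin l,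
              (fun j : Fin n => xor (m j) (Rh.1 i j)) ∈ B Rh.2 i)).card : ℝ) /
        (Fintype.card ((Fin l → (Fin n → Bool)) × H) : ℝ) ≤
      δ + ((2 : ℝ) ^ n)⁻¹ := by
  classical
  set RT := Fin l → (Fin n → Bool) with hRT
  have cardRn : Fintype.card RT = (2 ^ n) ^ l := by
    simp [hRT, Fintype.card_fun]
  have cardR : (Fintype.card RT : ℝ) = ((2 : ℝ) ^ n) ^ l := by
    rw [cardRn]; push_cast; ring
  have cardProd : (Fintype.card (RT × H) : ℝ)
      = ((2 : ℝ) ^ n) ^ l * (Fintype.card H : ℝ) := by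
    rw [Fintype.card_prod, Nat.cast_mul, cardR]
  set P : RT × H → Prop := fun Rh =>
      Rh.2 ∉ G ∨ ∃ m : Fin n → Bool, ∀ i : Fin l,
        (fun j : Fin n => xor (m j) (Rh.1 i j)) ∈ B Rh.2 i with hP
  -- split the event
  have hsplit : (univ.filter P) ⊆
      (univ.filter (fun Rh : RT × H => Rh.2 ∉ G)) ∪
      (univ.filter (fun Rh : RT × H => Rh.2 ∈ G ∧ ∃ m : Fin n → Bool, ∀ i : Fin l,
        (fun j : Fin n => xor (m j) (Rh.1 i j)) ∈ B Rh.2 i)) := by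
    intro Rh hRh
    simp only [mem_filter, mem_univ, true_and, mem_union, hP] at hRh ⊢
    by_cases hg : Rh.2 ∈ G
    · rcases hRh with h | h
      · exact absurd hg h
      · exact Or.inr ⟨hg, h⟩
    · exact Or.inl hg
  -- bound the first piece
  have cardA : ((univ.filter (fun Rh : RT × H => Rh.2 ∉ G)).card : ℝ)
      ≤ ((2:ℝ)^n)^l * (δ * (Fintype.card H : ℝ)) := by
    rw [fiber_card]
    push_cast
    have step : ∀ x : H, ((univ.filter (fun _ : RT => x ∉ G)).card : ℝ)
        = if x ∈ G then 0 else ((2:ℝ)^n)^l := by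
      intro x
      by_cases hx : x ∈ G
      · simp [hx]
      · rw [if_neg hx, Finset.filter_true_of_mem (fun _ _ => hx), Finset.card_univ,
          cardRn]
        push_cast; ring
    calc ∑ x : H, ((univ.filter (fun _ : RT => x ∉ G)).card : ℝ)
        = ∑ x : H, (if x ∈ G then 0 else ((2:ℝ)^n)^l) :=
          Finset.sum_congr rfl fun x _ => step x
      _ = ((univ.filter (fun x : H => ¬ x ∈ G)).card : ℝ) * ((2:ℝ)^n)^l := by
          rw [Finset.sum_ite, Finset.sum_const_zero, zero_add, Finset.sum_const,
            nsmul_eq_mul]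
      _ = (((univ \ G).card : ℕ) : ℝ) * ((2:ℝ)^n)^l := by
          congr 2
          simp [Finset.sdiff_eq_filter]
      _ ≤ (δ * (Fintype.card H : ℝ)) * ((2:ℝ)^n)^l := by
          apply mul_le_mul_of_nonneg_right hG; positivity
      _ = ((2:ℝ)^n)^l * (δ * (Fintype.card H : ℝ)) := by ring
  -- bound the second piece
  have cardC : ((univ.filter (fun Rh : RT × H => Rh.2 ∈ G ∧ ∃ m : Fin n → Bool, ∀ i : Fin l,
        (fun j : Fin n => xor (m j) (Rh.1 i j)) ∈ B Rh.2 i)).card : ℝ)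
      ≤ (Fintype.card H : ℝ) * ((2:ℝ)^n * (p * 2^n)^l) := by
    rw [fiber_card]
    push_cast
    have step : ∀ h : H, ((univ.filter (fun R : RT => h ∈ G ∧ ∃ m : Fin n → Bool, ∀ i : Fin l,
        (fun j : Fin n => xor (m j) (R i j)) ∈ B h i)).card : ℝ)
        ≤ (2:ℝ)^n * (p * 2^n)^l := by
      intro h
      by_cases hh : h ∈ G
      · have hsub : (univ.filter (fun R : RT => h ∈ G ∧ ∃ m : Fin n → Bool, ∀ i : Fin l,
            (fun j : Fin n => xor (m j) (R i j)) ∈ B h i))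
            ⊆ Finset.biUnion univ (fun m : Fin n → Bool =>
              univ.filter (fun R : RT => ∀ i : Fin l,
                (fun j : Fin n => xor (m j) (R i j)) ∈ B h i)) := by
          intro R hR
          simp only [mem_filter, mem_univ, true_and] at hR
          obtain ⟨-, m, hm⟩ := hR
          exact Finset.mem_biUnion.2 ⟨m, mem_univ _, by
            simp only [mem_filter, mem_univ, true_and]; exact hm⟩
        have hcard := Finset.card_le_card hsub
        have hcard2 := le_trans hcard (Finset.card_biUnion_le)
        have hreal : ((Finset.biUnion univ (fun m : Fin n → Bool =>
              univ.filter (fun R : RT => ∀ i : Fin l,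
                (fun j : Fin n => xor (m j) (R i j)) ∈ B h i))).card : ℝ)
            ≤ (2:ℝ)^n * (p * 2^n)^l := by
          calc ((Finset.biUnion univ _).card : ℝ)
              ≤ ∑ m : Fin n → Bool, ((univ.filter (fun R : RT => ∀ i : Fin l,
                  (fun j : Fin n => xor (m j) (R i j)) ∈ B h i)).card : ℝ) := by
                exact_mod_cast Finset.card_biUnion_le
            _ ≤ ∑ _m : Fin n → Bool, (p * 2^n)^l := by
                apply Finset.sum_le_sum
                intro m _
                rw [shift_card n l (B h) m]
                push_cast
                calc (∏ i : Fin l, ((B h i).card : ℝ))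
                    ≤ ∏ _i : Fin l, (p * 2^n) := by
                      apply Finset.prod_le_prod
                      · intro i _; positivity
                      · intro i _; exact hB h hh i
                  _ = (p * 2^n)^l := by
                      rw [Finset.prod_const, Finset.card_univ, Fintype.card_fin]
            _ = (2:ℝ)^n * (p * 2^n)^l := by
                rw [Finset.sum_const, Finset.card_univ, nsmul_eq_mul]
                simp
        calc ((univ.filter (fun R : RT => h ∈ G ∧ ∃ m : Fin n → Bool, ∀ i : Fin l,
              (fun j : Fin n => xor (m j) (R i j)) ∈ B h i)).card : ℝ)
            ≤ _ := by exact_mod_cast Finset.card_le_card hsub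
          _ ≤ (2:ℝ)^n * (p * 2^n)^l := hreal
      · have : (univ.filter (fun R : RT => h ∈ G ∧ ∃ m : Fin n → Bool, ∀ i : Fin l,
            (fun j : Fin n => xor (m j) (R i j)) ∈ B h i)) = ∅ := by
          apply Finset.filter_false_of_mem
          intro R _ hcon
          exact hh hcon.1
        rw [this]
        simp
        positivity
    calc ∑ h : H, ((univ.filter (fun R : RT => h ∈ G ∧ ∃ m : Fin n → Bool, ∀ i : Fin l,
          (fun j : Fin n => xor (m j) (R i j)) ∈ B h i)).card : ℝ)
        ≤ ∑ _h : H, (2:ℝ)^n * (p * 2^n)^l :=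
          Finset.sum_le_sum fun h _ => step h
      _ = (Fintype.card H : ℝ) * ((2:ℝ)^n * (p * 2^n)^l) := by
          rw [Finset.sum_const, Finset.card_univ, nsmul_eq_mul]
  -- total
  have hcards : ((univ.filter P).card : ℝ)
      ≤ ((2:ℝ)^n)^l * (δ * (Fintype.card H : ℝ))
        + (Fintype.card H : ℝ) * ((2:ℝ)^n * (p * 2^n)^l) := by
    have h1 : ((univ.filter P).card : ℝ)
        ≤ ((univ.filter (fun Rh : RT × H => Rh.2 ∉ G)).card : ℝ)
          + ((univ.filter (fun Rh : RT × H => Rh.2 ∈ G ∧ ∃ m : Fin n → Bool, ∀ i : Fin l,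
              (fun j : Fin n => xor (m j) (Rh.1 i j)) ∈ B Rh.2 i)).card : ℝ) := by
      have := le_trans (Finset.card_le_card hsplit) (Finset.card_union_le _ _)
      exact_mod_cast this
    linarith [cardA, cardC]
  -- arithmetic finish
  have hpow : (2:ℝ)^n * p^l ≤ ((2:ℝ)^n)⁻¹ := by
    have h1 : p ^ l ≤ ((1:ℝ)/4) ^ l := pow_le_pow_left₀ hp0 hp4 l
    have h2 : ((1:ℝ)/4) ^ l ≤ ((1:ℝ)/4) ^ n :=
      pow_le_pow_of_le_one (by norm_num) (by norm_num) hln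
    have h3 : (2:ℝ)^n * ((1:ℝ)/4)^n = ((2:ℝ)^n)⁻¹ := by
      rw [← mul_pow]
      norm_num
      rw [← inv_pow]
      norm_num
    calc (2:ℝ)^n * p^l ≤ (2:ℝ)^n * ((1:ℝ)/4)^n := by
          apply mul_le_mul_of_nonneg_left (le_trans h1 h2); positivity
      _ = ((2:ℝ)^n)⁻¹ := h3
  have hDpos : (0:ℝ) < (Fintype.card (RT × H) : ℝ) := by
    exact_mod_cast Fintype.card_pos
  rw [div_le_iff₀ hDpos, cardProd]
  have expand : (p * 2^n)^l = p^l * ((2:ℝ)^n)^l := by rw [mul_pow]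
  have hHpos : (0:ℝ) ≤ (Fintype.card H : ℝ) := by positivity
  have key : (Fintype.card H : ℝ) * ((2:ℝ)^n * (p * 2^n)^l)
      ≤ ((2:ℝ)^n)⁻¹ * (((2:ℝ)^n)^l * (Fintype.card H : ℝ)) := by
    rw [expand]
    have : (2:ℝ)^n * (p^l * ((2:ℝ)^n)^l) ≤ ((2:ℝ)^n)⁻¹ * ((2:ℝ)^n)^l := by
      have := mul_le_mul_of_nonneg_right hpow (show (0:ℝ) ≤ ((2:ℝ)^n)^l by positivity)
      linarith [this]
    calc (Fintype.card H : ℝ) * ((2:ℝ)^n * (p^l * ((2:ℝ)^n)^l))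
        ≤ (Fintype.card H : ℝ) * (((2:ℝ)^n)⁻¹ * ((2:ℝ)^n)^l) :=
          mul_le_mul_of_nonneg_left this hHpos
      _ = ((2:ℝ)^n)⁻¹ * (((2:ℝ)^n)^l * (Fintype.card H : ℝ)) := by ring
  calc ((univ.filter P).card : ℝ)
      ≤ ((2:ℝ)^n)^l * (δ * (Fintype.card H : ℝ))
        + (Fintype.card H : ℝ) * ((2:ℝ)^n * (p * 2^n)^l) := hcards
    _ ≤ δ * (((2:ℝ)^n)^l * (Fintype.card H : ℝ))
        + ((2:ℝ)^n)⁻¹ * (((2:ℝ)^n)^l * (Fintype.card H : ℝ)) := by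
        have : ((2:ℝ)^n)^l * (δ * (Fintype.card H : ℝ))
            = δ * (((2:ℝ)^n)^l * (Fintype.card H : ℝ)) := by ring
        linarith [key]
    _ = (δ + ((2:ℝ)^n)⁻¹) * (((2:ℝ)^n)^l * (Fintype.card H : ℝ)) := by ring
end
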